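/- Let a, b, c be rational numbers with c ≠ ab, and let λ, μ be complex numbers satisfying λ + μ = 1 + c and λ·μ = c − ab (i.e., λ and μ are the eigenvalues of the matrix [[1, b], [a, c]]). Then μ ≠ 0, and if there exists a positive integer n with λⁿ = μⁿ (i.e., the ratio λ/μ is a root of unity), then at least one of the following holds: c + 1 = 0, or ab + c² + c + 1 = 0, or 2ab + c² + 1 = 0, or 3ab + c² − c + 1 = 0, or 4ab + c² − 2c + 1 = 0. -/

import Mathlib

theorem stmt_2 (a b c : ℚ) (h : c ≠ a * b) (lam mu : ℂ)
    (hsum : lam + mu = 1 + (c : ℂ)) (hprod : lam * mu = (c : ℂ) - (a : ℂ) * b) :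
    mu ≠ 0 ∧
    ((∃ n : ℕ, 0 < n ∧ lam ^ n = mu ^ n) →
      (c + 1 = 0 ∨ a * b + c ^ 2 + c + 1 = 0 ∨ 2 * a * b + c ^ 2 + 1 = 0 ∨
       3 * a * b + c ^ 2 - c + 1 = 0 ∨ 4 * a * b + c ^ 2 - 2 * c + 1 = 0)) := by
  have hq0 : (c - a * b : ℚ) ≠ 0 := sub_ne_zero.mpr h
  have hpC : (c : ℂ) - (a : ℂ) * b ≠ 0 := by
    intro h0
    apply hq0
    have : ((c - a * b : ℚ) : ℂ) = 0 := by push_cast; linear_combination h0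
    exact_mod_cast this
  have hmu : mu ≠ 0 := by
    rintro rfl
    simp only [mul_zero] at hprod
    exact hpC hprod.symm
  have hlam : lam ≠ 0 := by
    rintro rfl
    simp only [zero_mul] at hprod
    exact hpC hprod.symm
  refine ⟨hmu, ?_⟩
  rintro ⟨n, hn, hpow⟩
  set ζ : ℂ := lam / mu with hζ
  have hζn : ζ ^ n = 1 := by
    rw [hζ, div_pow, hpow, div_self (pow_ne_zero _ hmu)]
  have hζ0 : ζ ≠ 0 := div_ne_zero hlam hmu
  have hint : IsIntegral ℤ ζ := by
    refine ⟨Polynomial.X ^ n - Polynomial.C 1, Polynomial.monic_X_pow_sub_C 1 hn.ne', ?_⟩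
    simp [Polynomial.eval₂_sub, hζn]
  have hintinv : IsIntegral ℤ ζ⁻¹ := by
    have hone : ζ * ζ ^ (n - 1) = 1 := by
      rw [← pow_succ']
      have : n - 1 + 1 = n := by omega
      rw [this, hζn]
    rw [inv_eq_of_mul_eq_one_right hone]
    exact hint.pow _
  have hintt : IsIntegral ℤ (ζ + ζ⁻¹) := hint.add hintinv
  set q : ℚ := ((1 + c) ^ 2 - 2 * (c - a * b)) / (c - a * b) with hqdef
  have h2 : lam ^ 2 + mu ^ 2 = (1 + (c : ℂ)) ^ 2 - 2 * ((c : ℂ) - (a : ℂ) * b) := by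
    linear_combination (lam + mu + 1 + (c : ℂ)) * hsum - 2 * hprod
  have hqt : (q : ℂ) = ζ + ζ⁻¹ := by
    rw [hqdef, hζ, inv_div]
    push_cast
    have hsplit : lam / mu + mu / lam = (lam ^ 2 + mu ^ 2) / (lam * mu) := by
      field_simp
    rw [hsplit, h2, hprod]
  -- q is a rational algebraic integer, hence an integer
  have hqint : IsIntegral ℤ q := by
    have : IsIntegral ℤ ((algebraMap ℚ ℂ) q) := by
      rw [show (algebraMap ℚ ℂ) q = (q : ℂ) from rfl, hqt]; exact hintt
    exact (isIntegral_algebraMap_iff (algebraMap ℚ ℂ).injective).mp this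
  obtain ⟨m, hm⟩ := IsIntegrallyClosed.isIntegral_iff.mp hqint
  have hm' : (m : ℚ) = q := hm
  -- |q| ≤ 2
  have habsζ : ‖ζ‖ = 1 := by
    have h1 : ‖ζ‖ ^ n = 1 := by
      rw [← norm_pow, hζn, norm_one]
    have h0 : 0 ≤ ‖ζ‖ := norm_nonneg ζ
    rcases lt_trichotomy (‖ζ‖) 1 with hlt | heq | hgt
    · have := pow_lt_one₀ h0 hlt hn.ne'
      linarith
    · exact heq
    · have := one_lt_pow₀ hgt hn.ne'
      linarith
  have habsinv : ‖ζ⁻¹‖ = 1 := by rw [norm_inv, habsζ]; norm_num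
  have hq2 : |q| ≤ 2 := by
    have : ‖(q : ℂ)‖ ≤ 2 := by
      rw [hqt]
      calc ‖ζ + ζ⁻¹‖ ≤ ‖ζ‖ + ‖ζ⁻¹‖ := norm_add_le _ _
        _ = 2 := by rw [habsζ, habsinv]; norm_num
    have hcast : ((q : ℂ)) = (((q : ℝ)) : ℂ) := by norm_cast
    rw [hcast, Complex.norm_real, Real.norm_eq_abs] at this
    exact_mod_cast this
  have hm2 : |m| ≤ 2 := by
    have : |(m : ℚ)| ≤ 2 := by rw [hm']; exact hq2
    exact_mod_cast this
  have hmlb : -2 ≤ m := by cases' abs_le.mp hm2 with h1 h2; exact h1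
  have hmub : m ≤ 2 := (abs_le.mp hm2).2
  -- from m = q, clear denominators
  have hkey : (1 + c) ^ 2 - 2 * (c - a * b) = (m : ℚ) * (c - a * b) := by
    rw [hm', hqdef]
    field_simp
  interval_cases m <;> norm_num at hkey
  · left; linarith
  · right; left; linear_combination hkey
  · right; right; left; linear_combination hkey
  · right; right; right; left; linear_combination hkey
  · right; right; right; right; linear_combination hkey
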